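/- Let A be a nonnegative integrable random variable with P(A > 0) > 0, and let G be a standard normal random variable independent of A. For s > 0 define Γ_s = A·exp(s·G − s²/2), and for p ∈ (0,1) let Q_s(p) denote the p-quantile of Γ_s (the generalized inverse of its CDF). Then for every p ∈ (0,1) and all 0 < s₁ ≤ s₂, E[Γ_{s₁}·1{Γ_{s₁} ≤ Q_{s₁}(p)}] ≥ E[Γ_{s₂}·1{Γ_{s₂} ≤ Q_{s₂}(p)}]; that is, the lower partial expectation of Γ_s at level p is nonincreasing in s. -/

import Mathlib

open MeasureTheory ProbabilityTheory Filter Topology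

lemma tilt_gaussian (s : ℝ) :
    (gaussianReal 0 1).withDensity (fun g => ENNReal.ofReal (Real.exp (s * g - s ^ 2 / 2)))
      = gaussianReal s 1 := by
  rw [gaussianReal_of_var_ne_zero 0 one_ne_zero, gaussianReal_of_var_ne_zero s one_ne_zero,
    ← withDensity_mul _ (measurable_gaussianPDF 0 1) (by fun_prop)]
  congr 1
  ext g
  simp only [Pi.mul_apply, gaussianPDF]
  rw [← ENNReal.ofReal_mul (gaussianPDFReal_nonneg _ _ _)]
  congr 1
  simp only [gaussianPDFReal, NNReal.coe_one, mul_one, sub_zero]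
  rw [mul_assoc, ← Real.exp_add]
  ring_nf

lemma lintegral_tilt (s : ℝ) {T : Set ℝ} (hT : MeasurableSet T) :
    ∫⁻ g in T, ENNReal.ofReal (Real.exp (s * g - s ^ 2 / 2)) ∂(gaussianReal 0 1)
      = gaussianReal s 1 T := by
  rw [← tilt_gaussian s, withDensity_apply _ hT]

lemma integrable_tilt (s : ℝ) :
    Integrable (fun g => Real.exp (s * g - s ^ 2 / 2)) (gaussianReal 0 1) := by
  constructor
  · exact (Real.measurable_exp.comp (by fun_prop)).aestronglyMeasurable
  · rw [hasFiniteIntegral_iff_ofReal (ae_of_all _ fun g => (Real.exp_pos _).le)]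
    rw [← setLIntegral_univ, lintegral_tilt s MeasurableSet.univ]
    simp

lemma setIntegral_tilt (s : ℝ) {T : Set ℝ} (hT : MeasurableSet T) :
    ∫ g in T, Real.exp (s * g - s ^ 2 / 2) ∂(gaussianReal 0 1)
      = (gaussianReal s 1 T).toReal := by
  rw [integral_eq_lintegral_of_nonneg_ae (ae_of_all _ fun g => (Real.exp_pos _).le)
      ((Real.measurable_exp.comp (by fun_prop : Measurable fun g : ℝ => s * g - s ^ 2 / 2)).aestronglyMeasurable.restrict),
    lintegral_tilt s hT]

lemma gaussian_tilt_mono {s₁ s₂ : ℝ} (h : s₁ ≤ s₂) (c : ℝ) :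
    (gaussianReal s₂ 1 (Set.Iic c)).toReal ≤ (gaussianReal s₁ 1 (Set.Iic c)).toReal := by
  have key : ∀ s : ℝ, gaussianReal s 1 (Set.Iic c) = gaussianReal 0 1 (Set.Iic (c - s)) := by
    intro s
    have h0 : gaussianReal s 1 = (gaussianReal 0 1).map (· + s) := by
      rw [gaussianReal_map_add_const s, zero_add]
    rw [h0, Measure.map_apply (by fun_prop) measurableSet_Iic]
    congr 1
    ext x
    simp only [Set.mem_preimage, Set.mem_Iic]
    constructor <;> intro <;> linarith
  rw [key, key]
  exact ENNReal.toReal_mono (measure_ne_top _ _)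
    (measure_mono (Set.Iic_subset_Iic.2 (by linarith)))


section Quantile

variable {Ω : Type*} [MeasurableSpace Ω] {P : Measure Ω} [IsProbabilityMeasure P]
  {X : Ω → ℝ} {p : ℝ}

lemma cdf_mono : Monotone fun x => (P {ω | X ω ≤ x}).toReal := fun a b hab =>
  ENNReal.toReal_mono (measure_ne_top _ _) (measure_mono fun ω h => le_trans h hab)

lemma quantile_set_nonempty (hp1 : p < 1) :
    {x : ℝ | p ≤ (P {ω | X ω ≤ x}).toReal}.Nonempty := by
  have hmono : Monotone fun n : ℕ => {ω | X ω ≤ (n : ℝ)} := by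
    intro m n hmn ω h
    simp only [Set.mem_setOf_eq] at h ⊢
    exact le_trans h (by exact_mod_cast hmn)
  have hU : (⋃ n : ℕ, {ω | X ω ≤ (n : ℝ)}) = Set.univ := by
    ext ω
    simp only [Set.mem_iUnion, Set.mem_setOf_eq, Set.mem_univ, iff_true]
    exact exists_nat_ge (X ω)
  have h1 : Tendsto (fun n : ℕ => P {ω | X ω ≤ (n : ℝ)}) atTop (𝓝 1) := by
    have := tendsto_measure_iUnion_atTop (μ := P) hmono
    rwa [hU, measure_univ] at this
  have h2 : Tendsto (fun n : ℕ => (P {ω | X ω ≤ (n : ℝ)}).toReal) atTop (𝓝 1) := by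
    have := (ENNReal.tendsto_toReal (by simp : (1:ENNReal) ≠ ⊤)).comp h1
    exact this
  obtain ⟨n, hn⟩ := (h2.eventually (eventually_ge_nhds hp1)).exists
  exact ⟨n, hn⟩

lemma quantile_set_bddBelow (hXnn : ∀ ω, 0 ≤ X ω) (hp0 : 0 < p) :
    BddBelow {x : ℝ | p ≤ (P {ω | X ω ≤ x}).toReal} := by
  refine ⟨0, fun x hx => ?_⟩
  by_contra hneg
  push_neg at hneg
  have hempty : {ω | X ω ≤ x} = ∅ := by
    ext ω; simp only [Set.mem_setOf_eq, Set.mem_empty_iff_false, iff_false, not_le]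
    exact lt_of_lt_of_le hneg (hXnn ω)
  rw [Set.mem_setOf_eq, hempty] at hx
  simp at hx
  linarith

lemma le_cdf_quantile (hX : Measurable X) (hXnn : ∀ ω, 0 ≤ X ω) (hp0 : 0 < p) (hp1 : p < 1) :
    p ≤ (P {ω | X ω ≤ sInf {x : ℝ | p ≤ (P {ω | X ω ≤ x}).toReal}}).toReal := by
  set S := {x : ℝ | p ≤ (P {ω | X ω ≤ x}).toReal} with hS
  set q := sInf S with hq
  have hne := quantile_set_nonempty (P := P) (X := X) hp1
  have hbdd := quantile_set_bddBelow (P := P) hXnn hp0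
  have hmem : ∀ n : ℕ, p ≤ (P {ω | X ω ≤ q + 1 / (n + 1)}).toReal := by
    intro n
    obtain ⟨y, hy, hlt⟩ := (csInf_lt_iff hbdd hne).1
      (lt_add_of_pos_right q (by positivity : (0:ℝ) < 1 / (n + 1)))
    exact le_trans hy (cdf_mono hlt.le)
  have hanti : Antitone fun n : ℕ => {ω | X ω ≤ q + 1 / (n + 1)} := by
    intro m n hmn ω h
    simp only [Set.mem_setOf_eq] at h ⊢
    have hc : ((m:ℝ) + 1) ≤ (n:ℝ) + 1 := by exact_mod_cast Nat.succ_le_succ hmn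
    have : (1 : ℝ) / (n + 1) ≤ 1 / (m + 1) := one_div_le_one_div_of_le (by positivity) hc
    linarith
  have hI : (⋂ n : ℕ, {ω | X ω ≤ q + 1 / (n + 1)}) = {ω | X ω ≤ q} := by
    ext ω
    simp only [Set.mem_iInter, Set.mem_setOf_eq]
    constructor
    · intro h
      refine le_of_forall_pos_le_add fun ε hε => ?_
      obtain ⟨n, hn⟩ := exists_nat_one_div_lt hε
      exact le_trans (h n) (by linarith [hn])
    · intro h n
      have : (0:ℝ) < 1 / (n + 1) := by positivity
      linarith
  have htd := tendsto_measure_iInter_atTop (μ := P)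
    (s := fun n : ℕ => {ω | X ω ≤ q + 1 / (n + 1)})
    (fun n => (hX measurableSet_Iic).nullMeasurableSet) hanti ⟨0, measure_ne_top _ _⟩
  rw [hI] at htd
  have htd' : Tendsto (fun n : ℕ => (P {ω | X ω ≤ q + 1 / (n + 1)}).toReal) atTop
      (𝓝 ((P {ω | X ω ≤ q}).toReal)) := (ENNReal.tendsto_toReal (measure_ne_top _ _)).comp htd
  exact ge_of_tendsto' htd' hmem

lemma cdf_quantile_le (hX : Measurable X) (hXnn : ∀ ω, 0 ≤ X ω) (hp0 : 0 < p) (hp1 : p < 1)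
    (hQpos : 0 < sInf {x : ℝ | p ≤ (P {ω | X ω ≤ x}).toReal})
    (hatom : P {ω | X ω = sInf {x : ℝ | p ≤ (P {ω | X ω ≤ x}).toReal}} = 0) :
    (P {ω | X ω ≤ sInf {x : ℝ | p ≤ (P {ω | X ω ≤ x}).toReal}}).toReal ≤ p := by
  set S := {x : ℝ | p ≤ (P {ω | X ω ≤ x}).toReal} with hS
  set q := sInf S with hq
  have hbdd := quantile_set_bddBelow (P := P) hXnn hp0
  have hmem : ∀ n : ℕ, (P {ω | X ω ≤ q - 1 / (n + 1)}).toReal ≤ p := by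
    intro n
    have hnotin : q - 1 / (n + 1) ∉ S := by
      intro hin
      have := csInf_le hbdd hin
      have hpos : (0:ℝ) < 1 / (n + 1) := by positivity
      rw [← hq] at this
      linarith
    rw [hS, Set.mem_setOf_eq, not_le] at hnotin
    exact hnotin.le
  have hmono : Monotone fun n : ℕ => {ω | X ω ≤ q - 1 / (n + 1)} := by
    intro m n hmn ω h
    simp only [Set.mem_setOf_eq] at h ⊢
    have hc : ((m:ℝ) + 1) ≤ (n:ℝ) + 1 := by exact_mod_cast Nat.succ_le_succ hmn
    have : (1 : ℝ) / (n + 1) ≤ 1 / (m + 1) := one_div_le_one_div_of_le (by positivity) hc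
    linarith
  have hU : (⋃ n : ℕ, {ω | X ω ≤ q - 1 / (n + 1)}) = {ω | X ω < q} := by
    ext ω
    simp only [Set.mem_iUnion, Set.mem_setOf_eq]
    constructor
    · rintro ⟨n, hn⟩
      have : (0:ℝ) < 1 / (n + 1) := by positivity
      linarith
    · intro h
      obtain ⟨n, hn⟩ := exists_nat_one_div_lt (sub_pos.2 h)
      exact ⟨n, by linarith⟩
  have htd : Tendsto (fun n : ℕ => (P {ω | X ω ≤ q - 1 / (n + 1)}).toReal) atTop
      (𝓝 ((P {ω | X ω < q}).toReal)) := by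
    have h0 := tendsto_measure_iUnion_atTop (μ := P) hmono
    rw [hU] at h0
    exact (ENNReal.tendsto_toReal (measure_ne_top _ _)).comp h0
  have hlt : (P {ω | X ω < q}).toReal ≤ p := le_of_tendsto' htd hmem
  have hle : P {ω | X ω ≤ q} ≤ P {ω | X ω < q} := by
    have hsub : {ω | X ω ≤ q} ⊆ {ω | X ω < q} ∪ {ω | X ω = q} := by
      intro ω h
      rcases lt_or_eq_of_le (show X ω ≤ q from h) with h' | h'
      · exact Or.inl h'
      · exact Or.inr h'
    calc P {ω | X ω ≤ q} ≤ P ({ω | X ω < q} ∪ {ω | X ω = q}) := measure_mono hsub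
      _ ≤ P {ω | X ω < q} + P {ω | X ω = q} := measure_union_le _ _
      _ = P {ω | X ω < q} := by rw [hatom, add_zero]
  exact le_trans (ENNReal.toReal_mono (measure_ne_top _ _) hle) hlt

end Quantile


lemma gamma_no_atom {Ω : Type*} [MeasurableSpace Ω] (P : Measure Ω) [IsProbabilityMeasure P]
    (A G : Ω → ℝ) (hA : Measurable A) (hG : Measurable G)
    (hlaw : P.map G = gaussianReal 0 1) (hindep : ProbabilityTheory.IndepFun A G P)
    (s t : ℝ) (hs : 0 < s) (ht : 0 < t) :
    P {ω | A ω * Real.exp (s * G ω - s ^ 2 / 2) = t} = 0 := by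
  have hmap : P.map (fun ω => (A ω, G ω)) = (P.map A).prod (P.map G) :=
    (indepFun_iff_map_prod_eq_prod_map_map hA.aemeasurable hG.aemeasurable).1 hindep
  set T : Set (ℝ × ℝ) := {x | x.1 * Real.exp (s * x.2 - s ^ 2 / 2) = t} with hT
  have hTmeas : MeasurableSet T := by
    apply measurableSet_eq_fun
    · exact measurable_fst.mul (Real.measurable_exp.comp (by fun_prop))
    · exact measurable_const
  have hset : {ω | A ω * Real.exp (s * G ω - s ^ 2 / 2) = t} = (fun ω => (A ω, G ω)) ⁻¹' T := rfl
  rw [hset, ← Measure.map_apply (hA.prodMk hG) hTmeas, hmap, hlaw,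
    Measure.prod_apply hTmeas]
  have hslice : ∀ a : ℝ, (gaussianReal 0 1) (Prod.mk a ⁻¹' T) = 0 := by
    intro a
    apply gaussianReal_absolutelyContinuous 0 one_ne_zero
    have hsub : (Prod.mk a ⁻¹' T).Subsingleton := by
      intro g1 h1 g2 h2
      simp only [Set.mem_preimage, hT, Set.mem_setOf_eq] at h1 h2
      have ha : a ≠ 0 := by
        rintro rfl
        simp only [zero_mul] at h1
        exact absurd h1.symm ht.ne'
      have he : Real.exp (s * g1 - s ^ 2 / 2) = Real.exp (s * g2 - s ^ 2 / 2) := by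
        exact mul_left_cancel₀ ha (h1.trans h2.symm)
      have harg : s * g1 - s ^ 2 / 2 = s * g2 - s ^ 2 / 2 := Real.exp_eq_exp.1 he
      have : s * g1 = s * g2 := by linarith
      exact mul_left_cancel₀ hs.ne' this
    exact hsub.measure_zero volume
  rw [lintegral_congr hslice]
  simp

lemma inner_value (s : ℝ) {s₁ t a : ℝ} (hs₁ : 0 < s₁) (ht : 0 < t) (ha : 0 < a) :
    ∫ g, a * Real.exp (s * g - s ^ 2 / 2) *
        Set.indicator {x : ℝ × ℝ | x.1 * Real.exp (s₁ * x.2 - s₁ ^ 2 / 2) ≤ t}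
          (fun _ => (1 : ℝ)) (a, g) ∂(gaussianReal 0 1)
      = a * (gaussianReal s 1 (Set.Iic ((Real.log (t / a) + s₁ ^ 2 / 2) / s₁))).toReal := by
  set c : ℝ := (Real.log (t / a) + s₁ ^ 2 / 2) / s₁ with hc
  have hset : ∀ g : ℝ, a * Real.exp (s₁ * g - s₁ ^ 2 / 2) ≤ t ↔ g ≤ c := by
    intro g
    rw [mul_comm, ← le_div_iff₀ ha, ← Real.le_log_iff_exp_le (by positivity), hc]
    rw [le_div_iff₀ hs₁]
    constructor <;> intro h <;> nlinarith
  have hrw : ∀ g : ℝ, a * Real.exp (s * g - s ^ 2 / 2) *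
      Set.indicator {x : ℝ × ℝ | x.1 * Real.exp (s₁ * x.2 - s₁ ^ 2 / 2) ≤ t}
        (fun _ => (1 : ℝ)) (a, g)
      = a * Set.indicator (Set.Iic c) (fun g => Real.exp (s * g - s ^ 2 / 2)) g := by
    intro g
    by_cases h : g ≤ c
    · rw [Set.indicator_of_mem (show (a, g) ∈ _ from (hset g).2 h),
        Set.indicator_of_mem (show g ∈ Set.Iic c from h)]
      ring
    · rw [Set.indicator_of_notMem (show (a, g) ∉ _ from fun hm => h ((hset g).1 hm)),
        Set.indicator_of_notMem (show g ∉ Set.Iic c from h)]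
      ring
  rw [integral_congr_ae (ae_of_all _ hrw), integral_const_mul,
    integral_indicator measurableSet_Iic, setIntegral_tilt s measurableSet_Iic]

lemma step4 {Ω : Type*} [MeasurableSpace Ω] (P : Measure Ω) [IsProbabilityMeasure P]
    (A G : Ω → ℝ) (hA : Measurable A) (hAnn : ∀ ω, 0 ≤ A ω) (hAint : Integrable A P)
    (hG : Measurable G) (hlaw : P.map G = gaussianReal 0 1) (hindep : IndepFun A G P)
    {s₁ s₂ t : ℝ} (hs₁ : 0 < s₁) (hs₂ : 0 < s₂) (hs₁₂ : s₁ ≤ s₂) (ht : 0 < t) :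
    ∫ ω, A ω * Real.exp (s₂ * G ω - s₂ ^ 2 / 2) *
        Set.indicator {ω | A ω * Real.exp (s₁ * G ω - s₁ ^ 2 / 2) ≤ t} (fun _ => (1 : ℝ)) ω ∂P
      ≤ ∫ ω, A ω * Real.exp (s₁ * G ω - s₁ ^ 2 / 2) *
        Set.indicator {ω | A ω * Real.exp (s₁ * G ω - s₁ ^ 2 / 2) ≤ t} (fun _ => (1 : ℝ)) ω ∂P := by
  set μ : Measure ℝ := P.map A with hμ
  set γ : Measure ℝ := gaussianReal 0 1 with hγ
  have hmap : P.map (fun ω => (A ω, G ω)) = μ.prod γ := by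
    rw [← hlaw]
    exact (indepFun_iff_map_prod_eq_prod_map_map hA.aemeasurable hG.aemeasurable).1 hindep
  set T : Set (ℝ × ℝ) := {x | x.1 * Real.exp (s₁ * x.2 - s₁ ^ 2 / 2) ≤ t} with hT
  have hTmeas : MeasurableSet T := by
    apply measurableSet_le
    · exact measurable_fst.mul (Real.measurable_exp.comp (by fun_prop))
    · exact measurable_const
  have hFmeas : ∀ s : ℝ, Measurable fun x : ℝ × ℝ =>
      x.1 * Real.exp (s * x.2 - s ^ 2 / 2) * T.indicator (fun _ => (1 : ℝ)) x := by
    intro s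
    exact (measurable_fst.mul (Real.measurable_exp.comp (by fun_prop))).mul
      (measurable_const.indicator hTmeas)
  -- pull back to product measure
  have hpull : ∀ s : ℝ, ∫ ω, A ω * Real.exp (s * G ω - s ^ 2 / 2) *
        Set.indicator {ω | A ω * Real.exp (s₁ * G ω - s₁ ^ 2 / 2) ≤ t} (fun _ => (1 : ℝ)) ω ∂P
      = ∫ x, x.1 * Real.exp (s * x.2 - s ^ 2 / 2) * T.indicator (fun _ => (1 : ℝ)) x
          ∂(μ.prod γ) := by
    intro s
    rw [← hmap, integral_map (hA.prodMk hG).aemeasurable (hFmeas s).aestronglyMeasurable]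
    apply integral_congr_ae
    filter_upwards with ω
    by_cases h : A ω * Real.exp (s₁ * G ω - s₁ ^ 2 / 2) ≤ t
    · rw [Set.indicator_of_mem (show ω ∈ _ from h), Set.indicator_of_mem (show (A ω, G ω) ∈ T from h)]
    · rw [Set.indicator_of_notMem (show ω ∉ _ from h), Set.indicator_of_notMem (show (A ω, G ω) ∉ T from h)]
  have hμint : Integrable (fun a : ℝ => a) μ := by
    rw [hμ]
    exact (integrable_map_measure aestronglyMeasurable_id hA.aemeasurable).2 hAint
  have hbd : ∀ s : ℝ, Integrable (fun x : ℝ × ℝ => x.1 * Real.exp (s * x.2 - s ^ 2 / 2))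
      (μ.prod γ) := fun s => Integrable.mul_prod hμint (integrable_tilt s)
  have hFint : ∀ s : ℝ, Integrable (fun x : ℝ × ℝ =>
      x.1 * Real.exp (s * x.2 - s ^ 2 / 2) * T.indicator (fun _ => (1 : ℝ)) x) (μ.prod γ) := by
    intro s
    refine (hbd s).mono (hFmeas s).aestronglyMeasurable (ae_of_all _ fun x => ?_)
    rw [norm_mul]
    refine mul_le_of_le_one_right (norm_nonneg _) ?_
    by_cases h : x ∈ T
    · rw [Set.indicator_of_mem h]; simp
    · rw [Set.indicator_of_notMem h]; simp
  rw [hpull s₁, hpull s₂, integral_prod _ (hFint s₂), integral_prod _ (hFint s₁)]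
  have hae : ∀ᵐ a ∂μ, 0 ≤ a := by
    rw [hμ]
    exact (ae_map_iff hA.aemeasurable measurableSet_Ici).2 (ae_of_all _ hAnn)
  refine integral_mono_ae ((hFint s₂).integral_prod_left) ((hFint s₁).integral_prod_left) ?_
  filter_upwards [hae] with a ha
  rcases eq_or_lt_of_le ha with ha0 | ha0
  · simp [← ha0]
  · have h1 := inner_value s₂ hs₁ ht ha0
    have h2 := inner_value s₁ hs₁ ht ha0
    rw [← hγ, ← hT] at h1 h2
    beta_reduce
    rw [h1, h2]
    exact mul_le_mul_of_nonneg_left (gaussian_tilt_mono hs₁₂ _) ha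


/-- **Monotonicity in the radius of the lower partial expectation of the hybrid
likelihood ratio.** For a nonnegative integrable `A` with `P(A > 0) > 0` and an
independent standard normal `G`, set `Γ_s = A·exp(sG − s²/2)` and let `Q_s(p)` be the
`p`-quantile of `Γ_s`. Then for `p ∈ (0,1)` and `0 < s₁ ≤ s₂`,
`E[Γ_{s₁}·1{Γ_{s₁} ≤ Q_{s₁}(p)}] ≥ E[Γ_{s₂}·1{Γ_{s₂} ≤ Q_{s₂}(p)}]`. -/
theorem lower_partial_expectation_antitone_in_radius
    {Ω : Type*} [MeasurableSpace Ω] (P : Measure Ω) [IsProbabilityMeasure P]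
    (A G : Ω → ℝ)
    (hA : Measurable A) (hAnn : ∀ ω, 0 ≤ A ω) (hAint : Integrable A P)
    (hApos : 0 < P {ω | 0 < A ω})
    (hG : Measurable G) (hlaw : P.map G = gaussianReal 0 1)
    (hindep : IndepFun A G P)
    (Γ : ℝ → Ω → ℝ) (hΓ : Γ = fun s ω => A ω * Real.exp (s * G ω - s ^ 2 / 2))
    (Q : ℝ → ℝ → ℝ)
    (hQ : Q = fun s p => sInf {x : ℝ | p ≤ (P {ω | Γ s ω ≤ x}).toReal})
    (p : ℝ) (hp : p ∈ Set.Ioo (0 : ℝ) 1)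
    (s₁ s₂ : ℝ) (hs₁ : 0 < s₁) (hs₁₂ : s₁ ≤ s₂) :
    ∫ ω, Γ s₂ ω * Set.indicator {ω | Γ s₂ ω ≤ Q s₂ p} (fun _ => (1 : ℝ)) ω ∂P
      ≤ ∫ ω, Γ s₁ ω * Set.indicator {ω | Γ s₁ ω ≤ Q s₁ p} (fun _ => (1 : ℝ)) ω ∂P := by
  obtain ⟨hp0, hp1⟩ := hp
  have hs₂ : 0 < s₂ := lt_of_lt_of_le hs₁ hs₁₂
  subst hΓ
  subst hQ
  beta_reduce
  have hXm : ∀ s : ℝ, Measurable fun ω => A ω * Real.exp (s * G ω - s ^ 2 / 2) :=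
    fun s => hA.mul (Real.measurable_exp.comp (by fun_prop))
  have hXnn : ∀ (s : ℝ) (ω : Ω), 0 ≤ A ω * Real.exp (s * G ω - s ^ 2 / 2) :=
    fun s ω => mul_nonneg (hAnn ω) (Real.exp_pos _).le
  set Q₂ : ℝ := sInf {x : ℝ | p ≤ (P {ω | A ω * Real.exp (s₂ * G ω - s₂ ^ 2 / 2) ≤ x}).toReal}
    with hQ₂def
  set Q₁ : ℝ := sInf {x : ℝ | p ≤ (P {ω | A ω * Real.exp (s₁ * G ω - s₁ ^ 2 / 2) ≤ x}).toReal}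
    with hQ₁def
  rcases le_or_gt Q₂ 0 with hQ2 | hQ2
  · calc ∫ ω, A ω * Real.exp (s₂ * G ω - s₂ ^ 2 / 2) *
          Set.indicator {ω | A ω * Real.exp (s₂ * G ω - s₂ ^ 2 / 2) ≤ Q₂} (fun _ => (1 : ℝ)) ω ∂P
        = ∫ _ω, (0 : ℝ) ∂P := by
          apply integral_congr_ae
          filter_upwards with ω
          by_cases h : ω ∈ {ω | A ω * Real.exp (s₂ * G ω - s₂ ^ 2 / 2) ≤ Q₂}
          · have h0 : A ω * Real.exp (s₂ * G ω - s₂ ^ 2 / 2) = 0 :=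
              le_antisymm (le_trans (show _ ≤ Q₂ from h) hQ2) (hXnn s₂ ω)
            rw [Set.indicator_of_mem h, h0]
            ring
          · rw [Set.indicator_of_notMem h]
            ring
      _ = 0 := integral_zero _ _
      _ ≤ _ := integral_nonneg fun ω =>
          mul_nonneg (hXnn s₁ ω) (Set.indicator_nonneg (fun _ _ => zero_le_one) ω)
  · -- main case
    have hQ1pos : 0 < Q₁ := by
      by_contra hle
      push_neg at hle
      have h1 : p ≤ (P {ω | A ω * Real.exp (s₁ * G ω - s₁ ^ 2 / 2) ≤ Q₁}).toReal := by
        rw [hQ₁def]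
        exact le_cdf_quantile (hXm s₁) (hXnn s₁) hp0 hp1
      have h2 : (P {ω | A ω * Real.exp (s₁ * G ω - s₁ ^ 2 / 2) ≤ Q₁}).toReal
          ≤ (P {ω | A ω * Real.exp (s₂ * G ω - s₂ ^ 2 / 2) ≤ (0 : ℝ)}).toReal := by
        apply ENNReal.toReal_mono (measure_ne_top _ _)
        apply measure_mono
        intro ω h
        simp only [Set.mem_setOf_eq] at h ⊢
        have he1 := Real.exp_pos (s₁ * G ω - s₁ ^ 2 / 2)
        have he2 := Real.exp_pos (s₂ * G ω - s₂ ^ 2 / 2)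
        nlinarith
      have h3 : (0 : ℝ) ∈
          {x : ℝ | p ≤ (P {ω | A ω * Real.exp (s₂ * G ω - s₂ ^ 2 / 2) ≤ x}).toReal} :=
        le_trans h1 h2
      have h4 := csInf_le (quantile_set_bddBelow (P := P) (hXnn s₂) hp0) h3
      rw [← hQ₂def] at h4
      linarith
    have hcdfQ₂ : (P {ω | A ω * Real.exp (s₂ * G ω - s₂ ^ 2 / 2) ≤ Q₂}).toReal ≤ p := by
      rw [hQ₂def]
      exact cdf_quantile_le (hXm s₂) (hXnn s₂) hp0 hp1 hQ2
        (gamma_no_atom P A G hA hG hlaw hindep s₂ _ hs₂ hQ2)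
    have hcdfQ₁ : p ≤ (P {ω | A ω * Real.exp (s₁ * G ω - s₁ ^ 2 / 2) ≤ Q₁}).toReal := by
      rw [hQ₁def]
      exact le_cdf_quantile (hXm s₁) (hXnn s₁) hp0 hp1
    have hexpint : ∀ s : ℝ, Integrable (fun ω => Real.exp (s * G ω - s ^ 2 / 2)) P := by
      intro s
      have h := integrable_tilt s
      rw [← hlaw] at h
      exact (integrable_map_measure
        (Real.measurable_exp.comp (by fun_prop : Measurable fun x : ℝ => s * x - s ^ 2 / 2)).aestronglyMeasurable
        hG.aemeasurable).1 h
    have hXint : ∀ s : ℝ, Integrable (fun ω => A ω * Real.exp (s * G ω - s ^ 2 / 2)) P :=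
      fun s => IndepFun.integrable_mul
        (hindep.comp measurable_id
          (Real.measurable_exp.comp (by fun_prop : Measurable fun x : ℝ => s * x - s ^ 2 / 2)))
        hAint (hexpint s)
    set L : Set Ω := {ω | A ω * Real.exp (s₂ * G ω - s₂ ^ 2 / 2) ≤ Q₂} with hLdef
    set S : Set Ω := {ω | A ω * Real.exp (s₁ * G ω - s₁ ^ 2 / 2) ≤ Q₁} with hSdef
    have hLmeas : MeasurableSet L := measurableSet_le (hXm s₂) measurable_const
    have hSmeas : MeasurableSet S := measurableSet_le (hXm s₁) measurable_const
    have hind : ∀ (s : ℝ) (E : Set Ω), MeasurableSet E →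
        Integrable (fun ω => A ω * Real.exp (s * G ω - s ^ 2 / 2)
          * E.indicator (fun _ => (1 : ℝ)) ω) P := by
      intro s E hE
      have heq : (fun ω => A ω * Real.exp (s * G ω - s ^ 2 / 2)
          * E.indicator (fun _ => (1 : ℝ)) ω)
          = E.indicator (fun ω => A ω * Real.exp (s * G ω - s ^ 2 / 2)) := by
        funext ω
        by_cases h : ω ∈ E
        · rw [Set.indicator_of_mem h, Set.indicator_of_mem h]
          ring
        · rw [Set.indicator_of_notMem h, Set.indicator_of_notMem h]
          ring
      rw [heq]
      exact (hXint s).indicator hE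
    have key : ∀ ω, A ω * Real.exp (s₂ * G ω - s₂ ^ 2 / 2) * L.indicator (fun _ => (1 : ℝ)) ω
        + S.indicator (fun _ => Q₂) ω
        ≤ A ω * Real.exp (s₂ * G ω - s₂ ^ 2 / 2) * S.indicator (fun _ => (1 : ℝ)) ω
        + L.indicator (fun _ => Q₂) ω := by
      intro ω
      by_cases hL' : ω ∈ L <;> by_cases hS' : ω ∈ S
      · rw [Set.indicator_of_mem hL', Set.indicator_of_mem hL',
          Set.indicator_of_mem hS', Set.indicator_of_mem hS']
      · rw [Set.indicator_of_mem hL', Set.indicator_of_mem hL',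
          Set.indicator_of_notMem hS', Set.indicator_of_notMem hS']
        have : A ω * Real.exp (s₂ * G ω - s₂ ^ 2 / 2) ≤ Q₂ := hL'
        nlinarith
      · rw [Set.indicator_of_notMem hL', Set.indicator_of_notMem hL',
          Set.indicator_of_mem hS', Set.indicator_of_mem hS']
        have : Q₂ < A ω * Real.exp (s₂ * G ω - s₂ ^ 2 / 2) := lt_of_not_ge hL'
        nlinarith
      · rw [Set.indicator_of_notMem hL', Set.indicator_of_notMem hL',
          Set.indicator_of_notMem hS', Set.indicator_of_notMem hS']
    have hintineq := integral_mono
      (f := fun ω => A ω * Real.exp (s₂ * G ω - s₂ ^ 2 / 2) * L.indicator (fun _ => (1 : ℝ)) ω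
        + S.indicator (fun _ => Q₂) ω)
      (g := fun ω => A ω * Real.exp (s₂ * G ω - s₂ ^ 2 / 2) * S.indicator (fun _ => (1 : ℝ)) ω
        + L.indicator (fun _ => Q₂) ω)
      (Integrable.add (hind s₂ L hLmeas) ((integrable_const Q₂).indicator hSmeas))
      (Integrable.add (hind s₂ S hSmeas) ((integrable_const Q₂).indicator hLmeas)) key
    rw [integral_add (hind s₂ L hLmeas) ((integrable_const Q₂).indicator hSmeas),
      integral_add (hind s₂ S hSmeas) ((integrable_const Q₂).indicator hLmeas),
      integral_indicator_const Q₂ hSmeas, integral_indicator_const Q₂ hLmeas,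
      smul_eq_mul, smul_eq_mul] at hintineq
    have hPLS : (P L).toReal ≤ (P S).toReal := le_trans hcdfQ₂ (le_trans (le_refl p) hcdfQ₁)
    have hmul : (P L).toReal * Q₂ ≤ (P S).toReal * Q₂ :=
      mul_le_mul_of_nonneg_right hPLS hQ2.le
    have step3 : ∫ ω, A ω * Real.exp (s₂ * G ω - s₂ ^ 2 / 2)
          * L.indicator (fun _ => (1 : ℝ)) ω ∂P
        ≤ ∫ ω, A ω * Real.exp (s₂ * G ω - s₂ ^ 2 / 2)
          * S.indicator (fun _ => (1 : ℝ)) ω ∂P := by rw [measureReal_def, measureReal_def] at hintineq; linarith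
    refine le_trans step3 ?_
    exact step4 P A G hA hAnn hAint hG hlaw hindep hs₁ hs₂ hs₁₂ hQ1pos
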